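/- arXiv:1806.00111 — 5 statements merged into one kernel-verified Lean document; each statement's English description precedes it below -/
import Mathlib

section
/- Let D ≥ 1, N ≥ 1, let x_1, …, x_N ∈ ℝ^D, let τ_1, …, τ_N ≥ 0 with ∑_n τ_n > 0, let ν > 0, and let Σ be a symmetric positive-definite D×D real matrix. Define F : ℝ^D → ℝ by F(μ) = ∑_{n=1}^{N} τ_n · ((D+ν)/2) · ln(1 + (x_n − μ)ᵀ Σ⁻¹ (x_n − μ)/ν). If μ is a critical point of F (i.e. the Fréchet derivative of F at μ vanishes), then, setting ω_n = (ν + D)/(ν + (x_n − μ)ᵀ Σ⁻¹ (x_n − μ)), one has ∑_n τ_n ω_n > 0 and μ = (∑_{n=1}^{N} τ_n ω_n x_n)/(∑_{n=1}^{N} τ_n ω_n). (This is the location-update equation (6) of Proposition 1: F equals, up to an additive constant independent of μ, the τ-weighted negative log-likelihood of the multivariate Student-t density with parameters (ν, μ, Σ).) -/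
open scoped BigOperators Matrix

noncomputable def dotCLM {D : ℕ} (w : Fin D → ℝ) : (Fin D → ℝ) →L[ℝ] ℝ :=
  LinearMap.toContinuousLinearMap
    { toFun := fun v => dotProduct w v
      map_add' := fun a b => dotProduct_add w a b
      map_smul' := fun c a => by simp [dotProduct_smul] }

@[simp] lemma dotCLM_apply {D : ℕ} (w v : Fin D → ℝ) : dotCLM w v = dotProduct w v := rfl

lemma omega_eq (d ν c : ℝ) (hν : ν ≠ 0) (hc : ν + c ≠ 0) :
    (ν + d) / (ν + c) = (d + ν) / 2 * (ν / (ν + c)) * ν⁻¹ * 2 := by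
  field_simp
  ring

lemma quad_hasFDerivAt {D : ℕ} (A : Matrix (Fin D) (Fin D) ℝ) (hA : A.IsSymm)
    (a μ : Fin D → ℝ) :
    HasFDerivAt (fun μ : Fin D → ℝ => (a - μ) ⬝ᵥ (A *ᵥ (a - μ)))
      ((-2 : ℝ) • dotCLM (A *ᵥ (a - μ))) μ := by
  have key : ∀ μ' : Fin D → ℝ, (a - μ') ⬝ᵥ (A *ᵥ (a - μ')) =
      ∑ i, (a i - μ' i) * ∑ j, A i j * (a j - μ' j) := by
    intro μ'
    simp [dotProduct, Matrix.mulVec, Pi.sub_apply]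
  rw [show (fun μ : Fin D → ℝ => (a - μ) ⬝ᵥ (A *ᵥ (a - μ))) =
      fun μ' => ∑ i, (a i - μ' i) * ∑ j, A i j * (a j - μ' j) from funext key]
  have hproj : ∀ i : Fin D, HasFDerivAt (fun μ' : Fin D → ℝ => a i - μ' i)
      (-(ContinuousLinearMap.proj i : (Fin D → ℝ) →L[ℝ] ℝ)) μ := fun i =>
    (ContinuousLinearMap.proj i : (Fin D → ℝ) →L[ℝ] ℝ).hasFDerivAt.const_sub (a i)
  have hg : ∀ i : Fin D, HasFDerivAt (fun μ' : Fin D → ℝ => ∑ j, A i j * (a j - μ' j))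
      (∑ j, A i j • -(ContinuousLinearMap.proj j : (Fin D → ℝ) →L[ℝ] ℝ)) μ := by
    intro i
    exact HasFDerivAt.fun_sum fun j _ => (hproj j).const_mul (A i j)
  have hsum : HasFDerivAt (fun μ' : Fin D → ℝ => ∑ i, (a i - μ' i) * ∑ j, A i j * (a j - μ' j))
      (∑ i, ((a i - μ i) • (∑ j, A i j • -(ContinuousLinearMap.proj j : (Fin D → ℝ) →L[ℝ] ℝ))
         + (∑ j, A i j * (a j - μ j)) • -(ContinuousLinearMap.proj i : (Fin D → ℝ) →L[ℝ] ℝ))) μ :=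
    HasFDerivAt.fun_sum fun i _ => (hproj i).mul (hg i)
  convert hsum using 1
  case e'_5 => rfl
  ext v
  simp only [ContinuousLinearMap.smul_apply, dotCLM_apply, ContinuousLinearMap.coe_sum',
    Finset.sum_apply, ContinuousLinearMap.add_apply, ContinuousLinearMap.neg_apply,
    ContinuousLinearMap.proj_apply, smul_eq_mul]
  have hmv : ∀ i, (A *ᵥ (a - μ)) i = ∑ j, A i j * (a j - μ j) := by
    intro i; simp [Matrix.mulVec, dotProduct, Pi.sub_apply]
  have hswap : ∑ i, (a i - μ i) * ∑ j, A i j * -v j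
      = ∑ i, (∑ j, A i j * (a j - μ j)) * -v i := by
    simp_rw [Finset.mul_sum]
    rw [Finset.sum_comm]
    apply Finset.sum_congr rfl
    intro j _
    rw [Finset.sum_mul]
    apply Finset.sum_congr rfl
    intro i _
    rw [hA.apply i j]
    ring
  calc (-2 : ℝ) * (A *ᵥ (a - μ)) ⬝ᵥ v
      = ∑ i, (-2 : ℝ) * ((∑ j, A i j * (a j - μ j)) * v i) := by
        rw [dotProduct, Finset.mul_sum]
        exact Finset.sum_congr rfl fun i _ => by rw [hmv i]
    _ = ∑ i, ((a i - μ i) * ∑ j, A i j * -v j + (∑ j, A i j * (a j - μ j)) * -v i) := by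
        rw [Finset.sum_add_distrib, hswap, ← Finset.sum_add_distrib]
        exact Finset.sum_congr rfl fun i _ => by ring
    _ = ∑ i, ((a i - μ i) * ∑ j, A i j • -v j + (∑ j, A i j * (a j - μ j)) • -v i) := by
        simp [smul_eq_mul]

/-- location update, Equation 6 of Proposition 1: if `μ` is a critical point
of the τ-weighted negative Student-t log-likelihood
`F μ = ∑ n, τ n * ((D+ν)/2) * log (1 + (xₙ-μ)ᵀ Σ⁻¹ (xₙ-μ) / ν)`, then with
`ω n = (ν+D)/(ν + (xₙ-μ)ᵀ Σ⁻¹ (xₙ-μ))` one has `∑ τ ω > 0` and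
`μ = (∑ τ ω)⁻¹ • ∑ (τ ω) • xₙ`. -/
theorem studentT_location_update
    (D N : ℕ) (hD : 1 ≤ D) (hN : 1 ≤ N)
    (x : Fin N → Fin D → ℝ) (τ : Fin N → ℝ) (hτ : ∀ n, 0 ≤ τ n)
    (hτsum : 0 < ∑ n, τ n) (ν : ℝ) (hν : 0 < ν)
    (S : Matrix (Fin D) (Fin D) ℝ) (hSsymm : S.IsSymm) (hS : S.PosDef)
    (F : (Fin D → ℝ) → ℝ)
    (hF : F = fun μ => ∑ n, τ n * (((D : ℝ) + ν) / 2) *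
        Real.log (1 + (x n - μ) ⬝ᵥ (S⁻¹ *ᵥ (x n - μ)) / ν))
    (μ : Fin D → ℝ) (hcrit : fderiv ℝ F μ = 0)
    (ω : Fin N → ℝ)
    (hω : ω = fun n => (ν + (D : ℝ)) / (ν + (x n - μ) ⬝ᵥ (S⁻¹ *ᵥ (x n - μ)))) :
    0 < ∑ n, τ n * ω n ∧
      μ = (∑ n, τ n * ω n)⁻¹ • ∑ n, (τ n * ω n) • x n := by
  have hAsymm : (S⁻¹).IsSymm := by
    rw [Matrix.IsSymm, Matrix.transpose_nonsing_inv, hSsymm]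
  have hAps : (S⁻¹).PosSemidef := hS.inv.posSemidef
  -- q n ≥ 0
  set q : Fin N → ℝ := fun n => (x n - μ) ⬝ᵥ (S⁻¹ *ᵥ (x n - μ)) with hq
  have hq0 : ∀ n, 0 ≤ q n := by
    intro n
    have h := hAps.re_dotProduct_nonneg (x n - μ)
    simpa only [star_trivial, RCLike.re_to_real] using h
  have hνq : ∀ n, 0 < ν + q n := fun n => by linarith [hq0 n]
  have hωpos : ∀ n, 0 < ω n := by
    intro n
    rw [hω]
    have hD' : (0:ℝ) < (D:ℝ) + ν := by positivity
    exact div_pos (by linarith) (hνq n)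
  -- positivity of the sum
  obtain ⟨m, -, hm⟩ : ∃ m ∈ Finset.univ, 0 < τ m := by
    by_contra h
    push_neg at h
    have : ∑ n, τ n ≤ 0 := Finset.sum_nonpos h
    linarith
  have hsumpos : 0 < ∑ n, τ n * ω n := by
    apply Finset.sum_pos' (fun n _ => mul_nonneg (hτ n) (hωpos n).le)
    exact ⟨m, Finset.mem_univ m, mul_pos hm (hωpos m)⟩
  refine ⟨hsumpos, ?_⟩
  -- compute the derivative of F
  have harg : ∀ n, (0:ℝ) < 1 + q n / ν := fun n => by
    have := div_nonneg (hq0 n) hν.le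
    linarith
  have hFderiv : HasFDerivAt F
      (∑ n, (τ n * (((D : ℝ) + ν) / 2)) •
        ((1 + q n / ν)⁻¹ • (ν⁻¹ • ((-2 : ℝ) • dotCLM (S⁻¹ *ᵥ (x n - μ)))))) μ := by
    rw [hF]
    apply HasFDerivAt.fun_sum
    intro n _
    have h1 : HasFDerivAt (fun μ' : Fin D → ℝ => 1 + (x n - μ') ⬝ᵥ (S⁻¹ *ᵥ (x n - μ')) / ν)
        (ν⁻¹ • ((-2 : ℝ) • dotCLM (S⁻¹ *ᵥ (x n - μ)))) μ := by
      have h0 := ((quad_hasFDerivAt S⁻¹ hAsymm (x n) μ).const_mul ν⁻¹).const_add 1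
      simpa [div_eq_inv_mul] using h0
    have h3 := h1.log (ne_of_gt (harg n))
    exact h3.const_mul (τ n * (((D : ℝ) + ν) / 2))
  have hzero : (∑ n, (τ n * (((D : ℝ) + ν) / 2)) •
        ((1 + q n / ν)⁻¹ • (ν⁻¹ • ((-2 : ℝ) • dotCLM (S⁻¹ *ᵥ (x n - μ)))))) = 0 := by
    rw [← hFderiv.fderiv, hcrit]
  -- evaluate at basis vectors: vector equation
  have hinv : ∀ n, (1 + q n / ν)⁻¹ = ν / (ν + q n) := by
    intro n
    rw [show 1 + q n / ν = (ν + q n) / ν by field_simp, inv_div]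
  have hω'' : ∀ n, ω n = ((D : ℝ) + ν) / 2 * (ν / (ν + q n)) * ν⁻¹ * 2 := by
    intro n
    rw [hω]
    exact omega_eq (D : ℝ) ν (q n) (ne_of_gt hν) (ne_of_gt (hνq n))
  have hvec : ∀ i : Fin D, ∑ n, τ n * ω n * (S⁻¹ *ᵥ (x n - μ)) i = 0 := by
    intro i
    have h := congrFun (congrArg (fun L : (Fin D → ℝ) →L[ℝ] ℝ => (L : (Fin D → ℝ) → ℝ))
      hzero) (Pi.single i 1)
    simp only [ContinuousLinearMap.coe_sum', Finset.sum_apply, ContinuousLinearMap.smul_apply,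
      dotCLM_apply, smul_eq_mul, ContinuousLinearMap.zero_apply] at h
    have hterm : ∀ n : Fin N, τ n * ω n * (S⁻¹ *ᵥ (x n - μ)) i
        = -(τ n * (((D : ℝ) + ν) / 2) * ((1 + q n / ν)⁻¹ *
            (ν⁻¹ * (-2 * ((S⁻¹ *ᵥ (x n - μ)) ⬝ᵥ Pi.single i 1))))) := by
      intro n
      rw [dotProduct_single, mul_one, hω'' n, hinv n]
      ring
    calc ∑ n, τ n * ω n * (S⁻¹ *ᵥ (x n - μ)) i
        = ∑ n, -(τ n * (((D : ℝ) + ν) / 2) * ((1 + q n / ν)⁻¹ *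
            (ν⁻¹ * (-2 * ((S⁻¹ *ᵥ (x n - μ)) ⬝ᵥ Pi.single i 1))))) :=
          Finset.sum_congr rfl fun n _ => hterm n
      _ = 0 := by rw [Finset.sum_neg_distrib, h, neg_zero]
  -- conclude: S⁻¹ *ᵥ (∑ (τ ω) • (x n - μ)) = 0
  set z : Fin D → ℝ := ∑ n, (τ n * ω n) • (x n - μ) with hz
  have hAz : S⁻¹ *ᵥ z = 0 := by
    funext i
    rw [hz]
    have : S⁻¹ *ᵥ (∑ n, (τ n * ω n) • (x n - μ)) = ∑ n, (τ n * ω n) • (S⁻¹ *ᵥ (x n - μ)) := by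
      rw [show S⁻¹ *ᵥ (∑ n, (τ n * ω n) • (x n - μ))
          = Matrix.mulVecLin S⁻¹ (∑ n, (τ n * ω n) • (x n - μ)) from rfl, map_sum]
      exact Finset.sum_congr rfl fun n _ => by rw [map_smul]; rfl
    rw [this]
    simpa using hvec i
  have hzz : z = 0 := by
    have h := congrArg (fun v => S *ᵥ v) hAz
    simpa [Matrix.mulVec_mulVec,
      Matrix.mul_nonsing_inv S ((Matrix.isUnit_iff_isUnit_det S).mp hS.isUnit),
      Matrix.one_mulVec] using h
  have hsum : (∑ n, (τ n * ω n)) • μ = ∑ n, (τ n * ω n) • x n := by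
    have h := hzz
    rw [hz] at h
    have hexp : ∑ n, (τ n * ω n) • (x n - μ)
        = (∑ n, (τ n * ω n) • x n) - (∑ n, (τ n * ω n)) • μ := by
      rw [Finset.sum_smul, ← Finset.sum_sub_distrib]
      exact Finset.sum_congr rfl fun n _ => smul_sub _ _ _
    rw [hexp, sub_eq_zero] at h
    exact h.symm
  rw [← hsum, inv_smul_smul₀ hsumpos.ne']
end

section
/- Let D ≥ 1, N ≥ 1, let x_1, …, x_N ∈ ℝ^D, μ ∈ ℝ^D, let τ_1, …, τ_N ≥ 0 with ∑_n τ_n > 0, and let ν > 0. Define, on symmetric positive-definite D×D matrices A, the function G(A) = ∑_{n=1}^{N} τ_n · [ −(1/2) ln det A + ((D+ν)/2) ln(1 + (x_n − μ)ᵀ A (x_n − μ)/ν) ]. Suppose A is symmetric positive-definite and for every symmetric D×D matrix H the directional derivative of G at A in direction H vanishes, i.e. d/dt G(A + tH)|_{t=0} = 0. Then, setting ω_n = (ν + D)/(ν + (x_n − μ)ᵀ A (x_n − μ)), one has A⁻¹ = (∑_{n=1}^{N} τ_n ω_n (x_n − μ)(x_n − μ)ᵀ)/(∑_{n=1}^{N}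 τ_n). (This is the scale-matrix update equation (7) of Proposition 1, with A the precision matrix Σ⁻¹: G equals, up to an additive constant independent of A, the τ-weighted negative log-likelihood of the multivariate Student-t density with scale Σ = A⁻¹.) -/
open scoped BigOperators Matrix

open Polynomial Matrix

lemma hasDerivAt_logdet {D : ℕ} (A H : Matrix (Fin D) (Fin D) ℝ) (hA : A.PosDef) :
    HasDerivAt (fun t : ℝ => Real.log (A + t • H).det) ((A⁻¹ * H).trace) 0 := by
  have hdet : IsUnit A.det := isUnit_iff_ne_zero.2 hA.det_pos.ne'
  set B := A⁻¹ * H with hB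
  set q : Polynomial ℝ := (Matrix.det (1 + (X : ℝ[X]) • B.map C)).divX.divX with hq
  have key : ∀ t : ℝ, (A + t • H).det = A.det * (1 + B.trace * t + q.eval t * t ^ 2) := by
    intro t
    have h1 : A + t • H = A * (1 + t • B) := by
      rw [mul_add, mul_one, Matrix.mul_smul, hB, Matrix.mul_nonsing_inv_cancel_left _ _ hdet]
    rw [h1, Matrix.det_mul, Matrix.det_one_add_smul t B]
  have h1 : HasDerivAt (fun t : ℝ => 1 + B.trace * t + q.eval t * t ^ 2) B.trace 0 := by
    have ha := ((hasDerivAt_id (0 : ℝ)).const_mul B.trace).const_add (1 : ℝ)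
    have hb := (q.hasDerivAt (0 : ℝ)).fun_mul (hasDerivAt_pow 2 (0 : ℝ))
    simpa using ha.fun_add hb
  have hf : HasDerivAt (fun t : ℝ => (A + t • H).det) (A.det * B.trace) 0 := by
    have := h1.const_mul A.det
    simpa [← key] using this
  have h0 : (A + (0 : ℝ) • H).det ≠ 0 := by simpa using hA.det_pos.ne'
  have h2 := hf.log h0
  have h3 : A.det * B.trace / (A + (0 : ℝ) • H).det = B.trace := by
    simp [mul_comm, mul_div_assoc, div_self hA.det_pos.ne']
    field_simp [hA.det_pos.ne']
  rwa [h3] at h2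

lemma trace_mul_stdBasis {D : ℕ} (M : Matrix (Fin D) (Fin D) ℝ) (i j : Fin D) :
    (M * Matrix.single i j 1).trace = M j i := by
  simp [Matrix.trace, Matrix.diag, Matrix.mul_apply, Matrix.single, ite_and]

lemma dot_stdBasis {D : ℕ} (y : Fin D → ℝ) (i j : Fin D) :
    y ⬝ᵥ (Matrix.single i j (1 : ℝ) *ᵥ y) = y i * y j := by
  rw [Matrix.single_mulVec]
  simp [dotProduct, Function.update, Finset.sum_ite_eq']


/-- scale-matrix update, Equation 7 of Proposition 1: if the symmetric
positive-definite precision matrix `A` is a critical point (in all symmetric directions)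
of `G A = ∑ n, τ n * (-(1/2) * log (det A) + ((D+ν)/2) * log (1 + (xₙ-μ)ᵀ A (xₙ-μ)/ν))`,
then `A⁻¹ = (∑ τ)⁻¹ • ∑ (τ ω) • (xₙ-μ)(xₙ-μ)ᵀ` with
`ω n = (ν+D)/(ν + (xₙ-μ)ᵀ A (xₙ-μ))`. -/
theorem studentT_scale_update
    (D N : ℕ) (hD : 1 ≤ D) (hN : 1 ≤ N)
    (x : Fin N → Fin D → ℝ) (μ : Fin D → ℝ)
    (τ : Fin N → ℝ) (hτ : ∀ n, 0 ≤ τ n) (hτsum : 0 < ∑ n, τ n)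
    (ν : ℝ) (hν : 0 < ν)
    (G : Matrix (Fin D) (Fin D) ℝ → ℝ)
    (hG : G = fun A => ∑ n, τ n *
        (-(1 / 2) * Real.log A.det +
          (((D : ℝ) + ν) / 2) * Real.log (1 + (x n - μ) ⬝ᵥ (A *ᵥ (x n - μ)) / ν)))
    (A : Matrix (Fin D) (Fin D) ℝ) (hAsymm : A.IsSymm) (hA : A.PosDef)
    (hcrit : ∀ H : Matrix (Fin D) (Fin D) ℝ, H.IsSymm →
        deriv (fun t : ℝ => G (A + t • H)) 0 = 0)
    (ω : Fin N → ℝ)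
    (hω : ω = fun n => (ν + (D : ℝ)) / (ν + (x n - μ) ⬝ᵥ (A *ᵥ (x n - μ)))) :
    A⁻¹ = (∑ n, τ n)⁻¹ •
        ∑ n, (τ n * ω n) • Matrix.vecMulVec (x n - μ) (x n - μ) := by
  set y : Fin N → Fin D → ℝ := fun n => x n - μ with hy
  have hc : ∀ n, 0 ≤ y n ⬝ᵥ (A *ᵥ y n) := by
    intro n
    simpa using hA.posSemidef.dotProduct_mulVec_nonneg (y n)
  have hνc : ∀ n, 0 < ν + y n ⬝ᵥ (A *ᵥ y n) := fun n => by linarith [hc n]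
  -- derivative computation
  have hGder : ∀ H : Matrix (Fin D) (Fin D) ℝ,
      HasDerivAt (fun t : ℝ => G (A + t • H))
        (∑ n, τ n * (-(1 / 2) * (A⁻¹ * H).trace +
          (((D : ℝ) + ν) / 2) *
            ((y n ⬝ᵥ (H *ᵥ y n)) / (ν + y n ⬝ᵥ (A *ᵥ y n))))) 0 := by
    intro H
    rw [hG]
    refine HasDerivAt.fun_sum ?_
    intro n _
    refine HasDerivAt.const_mul _ (HasDerivAt.add ?_ ?_)
    · exact (hasDerivAt_logdet A H hA).const_mul (-(1 / 2))
    · set c : ℝ := y n ⬝ᵥ (A *ᵥ y n) with hcdef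
      set d : ℝ := y n ⬝ᵥ (H *ᵥ y n) with hddef
      have hfun : ∀ t : ℝ, (x n - μ) ⬝ᵥ ((A + t • H) *ᵥ (x n - μ)) = c + t * d := by
        intro t
        rw [Matrix.add_mulVec, Matrix.smul_mulVec, dotProduct_add, dotProduct_smul]
        simp [hcdef, hddef, hy, smul_eq_mul]
      have hlin : HasDerivAt (fun t : ℝ => 1 + (c + t * d) / ν) (d / ν) 0 := by
        have hb : HasDerivAt (fun t : ℝ => c + t * d) d 0 := by
          simpa using ((hasDerivAt_id (0 : ℝ)).mul_const d).const_add c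
        exact (hb.div_const ν).const_add 1
      have h0' : (1 : ℝ) + c / ν ≠ 0 := by
        have := div_nonneg (by simpa [hcdef] using hc n) hν.le
        positivity
      have h0 : 1 + ((c : ℝ) + 0 * d) / ν ≠ 0 := by simpa using h0'
      have h2 := (hlin.log h0).const_mul (((D : ℝ) + ν) / 2)
      simp only [hfun]
      refine h2.congr_deriv ?_
      rw [zero_mul, add_zero]
      field_simp
  -- criticality
  have hL : ∀ H : Matrix (Fin D) (Fin D) ℝ, H.IsSymm →
      (∑ n, τ n * (-(1 / 2) * (A⁻¹ * H).trace +
          (((D : ℝ) + ν) / 2) *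
            ((y n ⬝ᵥ (H *ᵥ y n)) / (ν + y n ⬝ᵥ (A *ᵥ y n))))) = 0 := by
    intro H hH
    rw [← (hGder H).deriv]
    exact hcrit H hH
  have hAinvsymm : A⁻¹.IsSymm := by
    rw [Matrix.IsSymm, Matrix.transpose_nonsing_inv, hAsymm]
  ext i j
  have hT : ∀ a b : Fin D, (Matrix.single a b (1 : ℝ))ᵀ = Matrix.single b a 1 := by
    intro a b
    ext k l
    simp [Matrix.single, Matrix.transpose_apply, and_comm]
  have hHsymm : (Matrix.single i j (1 : ℝ) + Matrix.single j i 1).IsSymm := by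
    rw [Matrix.IsSymm, Matrix.transpose_add, hT, hT, add_comm]
  have heq := hL _ hHsymm
  have htr : (A⁻¹ * (Matrix.single i j (1 : ℝ) + Matrix.single j i 1)).trace
      = 2 * A⁻¹ i j := by
    rw [mul_add, Matrix.trace_add, trace_mul_stdBasis, trace_mul_stdBasis]
    rw [show A⁻¹ j i = A⁻¹ i j from hAinvsymm.apply i j]
    ring
  have hd : ∀ n, y n ⬝ᵥ ((Matrix.single i j (1 : ℝ) + Matrix.single j i 1) *ᵥ y n)
      = 2 * (y n i * y n j) := by
    intro n
    rw [Matrix.add_mulVec, dotProduct_add, dot_stdBasis, dot_stdBasis]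
    ring
  rw [htr] at heq
  simp only [hd] at heq
  have hterm : ∀ n, τ n * (-(1 / 2) * (2 * A⁻¹ i j) +
      (((D : ℝ) + ν) / 2) * (2 * (y n i * y n j) / (ν + y n ⬝ᵥ (A *ᵥ y n))))
      = τ n * ω n * (y n i * y n j) - τ n * A⁻¹ i j := by
    intro n
    have hne := (hνc n).ne'
    have hyn : ∀ m, x m - μ = y m := fun m => rfl
    simp only [hω, hyn]
    field_simp
    ring
  rw [Finset.sum_congr rfl (fun n _ => hterm n), Finset.sum_sub_distrib, sub_eq_zero,
    ← Finset.sum_mul] at heq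
  have hinv : (∑ n, τ n)⁻¹ * (∑ n, τ n) = 1 := inv_mul_cancel₀ hτsum.ne'
  simp only [Matrix.smul_apply, Matrix.sum_apply, Matrix.vecMulVec_apply, smul_eq_mul]
  linear_combination (-(A⁻¹ i j)) * hinv - (∑ n, τ n)⁻¹ * heq
end

section
/- Let D ≥ 1, N ≥ 1, let x_1, …, x_N ∈ ℝ^D, μ ∈ ℝ^D, let Σ be a symmetric positive-definite D×D real matrix, and let τ_1, …, τ_N ≥ 0 with N' := ∑_n τ_n > 0. Let ψ denote the digamma function, ψ(x) = Γ'(x)/Γ(x) (the derivative of ln Γ). Define g : (0, ∞) → ℝ by g(ν) = −∑_{n=1}^{N} τ_n ln p(x_n; ν, μ, Σ), where p is the multivariate Student-t density. If ν > 0 satisfies g'(ν) = 0, then, setting ω_n(ν) = (ν + D)/(ν + d_Σ(x_n, μ)²), one has ln(ν/2) − ψ(ν/2) = ln((ν + D)/2) − ψ((ν + D)/2) − 1 − (1/N') ∑_{n=1}^{N} τ_n (ln ω_n(ν) − ω_n(ν)). (This is the degrees-of-freedom update equation (8) of Proposition 1, using ln((ν+D)/2) − ln(ν/2) = ln((ν+D)/ν).)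 -/
open scoped BigOperators Matrix

/-- The multivariate Student-t density on `ℝ^D` with degrees of freedom `ν`,
location `μ` and scale matrix `S` (Definition 1 of the paper). -/
noncomputable def studentTDensity (D : ℕ) (ν : ℝ) (μ : Fin D → ℝ)
    (S : Matrix (Fin D) (Fin D) ℝ) (x : Fin D → ℝ) : ℝ :=
  Real.Gamma (((D : ℝ) + ν) / 2) /
      (Real.Gamma (ν / 2) * (ν * Real.pi) ^ ((D : ℝ) / 2) * S.det ^ ((1 : ℝ) / 2)) *
    (1 + (x - μ) ⬝ᵥ (S⁻¹ *ᵥ (x - μ)) / ν) ^ (-(((D : ℝ) + ν) / 2))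

/-- The digamma function `ψ = (log ∘ Γ)'`. -/
noncomputable def digamma : ℝ → ℝ := deriv fun t => Real.log (Real.Gamma t)

lemma hasDerivAt_logGamma {s : ℝ} (hs : 0 < s) :
    HasDerivAt (fun t => Real.log (Real.Gamma t)) (digamma s) s := by
  have h1 : ∀ m : ℕ, s ≠ -(m : ℝ) := by
    intro m h
    rw [h] at hs
    have : (0:ℝ) ≤ m := Nat.cast_nonneg m
    linarith
  have hdiff : DifferentiableAt ℝ (fun t => Real.log (Real.Gamma t)) s :=
    (Real.differentiableAt_Gamma h1).log (Real.Gamma_pos_of_pos hs).ne'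
  simpa [digamma] using hdiff.hasDerivAt

lemma quad_nonneg {D : ℕ} {S : Matrix (Fin D) (Fin D) ℝ} (hS : S.PosDef) (v : Fin D → ℝ) :
    0 ≤ v ⬝ᵥ (S⁻¹ *ᵥ v) := by
  have h := hS.inv.posSemidef
  simpa using h.re_dotProduct_nonneg v

lemma log_studentTDensity (D : ℕ) {t : ℝ} (ht : 0 < t) (μ y : Fin D → ℝ)
    (S : Matrix (Fin D) (Fin D) ℝ) (hS : S.PosDef) :
    Real.log (studentTDensity D t μ S y) =
      Real.log (Real.Gamma ((t + (D:ℝ)) / 2)) - Real.log (Real.Gamma (t / 2))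
        - ((D:ℝ)/2) * Real.log t - ((D:ℝ)/2) * Real.log Real.pi
        - (1/2) * Real.log S.det
        - ((t + (D:ℝ))/2) * Real.log (1 + (y - μ) ⬝ᵥ (S⁻¹ *ᵥ (y - μ)) / t) := by
  have hd : 0 ≤ (y - μ) ⬝ᵥ (S⁻¹ *ᵥ (y - μ)) := quad_nonneg hS _
  set d := (y - μ) ⬝ᵥ (S⁻¹ *ᵥ (y - μ)) with hdd
  have hG1 : 0 < Real.Gamma ((t + (D:ℝ)) / 2) := Real.Gamma_pos_of_pos (by positivity)
  have hG2 : 0 < Real.Gamma (t / 2) := Real.Gamma_pos_of_pos (by positivity)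
  have hπ : 0 < Real.pi := Real.pi_pos
  have hdet : 0 < S.det := hS.det_pos
  have h1 : 0 < (t * Real.pi) ^ ((D:ℝ)/2) := Real.rpow_pos_of_pos (by positivity) _
  have h2 : 0 < S.det ^ ((1:ℝ)/2) := Real.rpow_pos_of_pos hdet _
  have h3 : 0 < 1 + d / t := by positivity
  have h4 : 0 < (1 + d / t) ^ (-((t + (D:ℝ)) / 2)) := Real.rpow_pos_of_pos h3 _
  rw [studentTDensity, add_comm ((D:ℝ)) t, ← hdd]
  rw [Real.log_mul (by positivity) h4.ne', Real.log_div hG1.ne' (by positivity),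
    Real.log_mul (by positivity) h2.ne', Real.log_mul hG2.ne' h1.ne',
    Real.log_rpow (by positivity), Real.log_rpow hdet, Real.log_rpow h3,
    Real.log_mul ht.ne' hπ.ne']
  ring

/-- degrees-of-freedom update, Equation 8 of Proposition 1: if `ν > 0` is a
critical point of the τ-weighted negative Student-t log-likelihood
`g ν = -∑ n, τ n * log p(xₙ; ν, μ, Σ)`, then
`log (ν/2) - ψ(ν/2) = log ((ν+D)/2) - ψ((ν+D)/2) - 1 - (1/N') ∑ τₙ (log ωₙ(ν) - ωₙ(ν))`
with `ωₙ(ν) = (ν+D)/(ν + d_Σ(xₙ,μ)²)` and `N' = ∑ τₙ`. -/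
theorem studentT_dof_update
    (D N : ℕ) (hD : 1 ≤ D) (hN : 1 ≤ N)
    (x : Fin N → Fin D → ℝ) (μ : Fin D → ℝ)
    (S : Matrix (Fin D) (Fin D) ℝ) (hSsymm : S.IsSymm) (hS : S.PosDef)
    (τ : Fin N → ℝ) (hτ : ∀ n, 0 ≤ τ n) (hτsum : 0 < ∑ n, τ n)
    (g : ℝ → ℝ)
    (hg : g = fun ν => -∑ n, τ n * Real.log (studentTDensity D ν μ S (x n)))
    (ν : ℝ) (hν : 0 < ν) (hcrit : deriv g ν = 0)
    (ω : Fin N → ℝ)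
    (hω : ω = fun n => (ν + (D : ℝ)) / (ν + (x n - μ) ⬝ᵥ (S⁻¹ *ᵥ (x n - μ)))) :
    Real.log (ν / 2) - digamma (ν / 2) =
      Real.log ((ν + (D : ℝ)) / 2) - digamma ((ν + (D : ℝ)) / 2) - 1 -
        (∑ n, τ n)⁻¹ * ∑ n, τ n * (Real.log (ω n) - ω n) := by
  set d : Fin N → ℝ := fun n => (x n - μ) ⬝ᵥ (S⁻¹ *ᵥ (x n - μ)) with hd
  have hdpos : ∀ n, 0 ≤ d n := fun n => quad_nonneg hS _
  have hνd : ∀ n, 0 < ν + d n := fun n => by have := hdpos n; linarith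
  have hνD : 0 < ν + (D:ℝ) := by positivity
  set L : Fin N → ℝ → ℝ := fun n t =>
    Real.log (Real.Gamma ((t + (D:ℝ)) / 2)) - Real.log (Real.Gamma (t / 2))
      - ((D:ℝ)/2) * Real.log t - ((D:ℝ)/2) * Real.log Real.pi
      - (1/2) * Real.log S.det
      - ((t + (D:ℝ))/2) * Real.log (1 + d n / t) with hL
  set E : Fin N → ℝ := fun n =>
    (1/2) * digamma ((ν + (D:ℝ))/2) - (1/2) * digamma (ν/2) - (D:ℝ)/(2*ν)
      - (1/2) * Real.log (1 + d n / ν)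
      + ((ν + (D:ℝ)) * d n) / (2 * ν * (ν + d n)) with hE
  have h3 : ∀ n, 0 < 1 + d n / ν := fun n => by have := hdpos n; positivity
  -- derivative of each L n
  have hLd : ∀ n, HasDerivAt (L n) (E n) ν := by
    intro n
    have inner1 : HasDerivAt (fun t : ℝ => (t + (D:ℝ))/2) (1/2) ν := by
      simpa using ((hasDerivAt_id ν).add_const (D:ℝ)).div_const 2
    have inner2 : HasDerivAt (fun t : ℝ => t/2) (1/2) ν := by
      simpa using (hasDerivAt_id ν).div_const 2
    have p1 : HasDerivAt (fun t => Real.log (Real.Gamma ((t + (D:ℝ))/2)))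
        (digamma ((ν + (D:ℝ))/2) * (1/2)) ν :=
      (hasDerivAt_logGamma (by positivity)).comp ν inner1
    have p2 : HasDerivAt (fun t => Real.log (Real.Gamma (t/2)))
        (digamma (ν/2) * (1/2)) ν :=
      (hasDerivAt_logGamma (by positivity)).comp ν inner2
    have p3 : HasDerivAt (fun t => ((D:ℝ)/2) * Real.log t) (((D:ℝ)/2) * ν⁻¹) ν :=
      (Real.hasDerivAt_log hν.ne').const_mul _
    have p6 : HasDerivAt (fun t : ℝ => 1 + d n / t) (d n * (-(ν^2)⁻¹)) ν := by
      simpa [div_eq_mul_inv] using ((hasDerivAt_inv hν.ne').const_mul (d n)).const_add 1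
    have plog : HasDerivAt (fun t => Real.log (1 + d n / t))
        ((d n * (-(ν^2)⁻¹)) / (1 + d n / ν)) ν := p6.log (h3 n).ne'
    have pprod : HasDerivAt (fun t => ((t + (D:ℝ))/2) * Real.log (1 + d n / t))
        ((1/2) * Real.log (1 + d n / ν)
          + ((ν + (D:ℝ))/2) * ((d n * (-(ν^2)⁻¹)) / (1 + d n / ν))) ν :=
      inner1.mul plog
    have htot : HasDerivAt (L n)
        (digamma ((ν + (D:ℝ)) / 2) * (1 / 2) - digamma (ν / 2) * (1 / 2)
          - (D:ℝ) / 2 * ν⁻¹ - 0 - 0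
          - (1 / 2 * Real.log (1 + d n / ν)
            + (ν + (D:ℝ)) / 2 * (d n * -(ν ^ 2)⁻¹ / (1 + d n / ν)))) ν :=
      ((((p1.sub p2).sub p3).sub (hasDerivAt_const ν (((D:ℝ)/2) * Real.log Real.pi))).sub
        (hasDerivAt_const ν ((1/2 : ℝ) * Real.log S.det))).sub pprod
    have hne1 : ν + d n ≠ 0 := (hνd n).ne'
    have hne2 : (1 + d n / ν) ≠ 0 := (h3 n).ne'
    convert htot using 1
    rw [hE]
    field_simp
    ring
  have hsum : HasDerivAt (fun t => -∑ n, τ n * L n t) (-∑ n, τ n * E n) ν := by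
    exact (HasDerivAt.fun_sum (fun n _ => (hLd n).const_mul (τ n))).neg
  have hEq : g =ᶠ[nhds ν] (fun t => -∑ n, τ n * L n t) := by
    filter_upwards [Ioi_mem_nhds hν] with t ht
    rw [hg]
    simp only [neg_inj]
    refine Finset.sum_congr rfl fun n _ => ?_
    rw [log_studentTDensity D ht μ (x n) S hS]
  have hgd : HasDerivAt g (-∑ n, τ n * E n) ν :=
    hsum.congr_of_eventuallyEq hEq
  have key : ∑ n, τ n * E n = 0 := by
    have := hgd.deriv
    rw [hcrit] at this
    linarith
  -- algebra
  have hωn : ∀ n, ω n = (ν + (D:ℝ)) / (ν + d n) := fun n => by rw [hω]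
  have hωlog : ∀ n, Real.log (ω n) = Real.log (ν + (D:ℝ)) - Real.log (ν + d n) := by
    intro n; rw [hωn]
    exact Real.log_div hνD.ne' (hνd n).ne'
  have hlog1 : ∀ n, Real.log (1 + d n / ν) = Real.log (ν + d n) - Real.log ν := by
    intro n
    rw [show 1 + d n / ν = (ν + d n) / ν by field_simp]
    exact Real.log_div (hνd n).ne' hν.ne'
  have key2 : ∑ n, τ n * (Real.log (ω n) - ω n) =
      (∑ n, τ n) * (Real.log (ν + (D:ℝ)) - Real.log ν - 1
        - digamma ((ν + (D:ℝ))/2) + digamma (ν/2)) := by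
    have expand : ∀ n, τ n * (Real.log (ω n) - ω n) =
        τ n * (Real.log (ν + (D:ℝ)) - Real.log ν - 1
          - digamma ((ν + (D:ℝ))/2) + digamma (ν/2)) + 2 * (τ n * E n) := by
      intro n
      rw [hωlog n, hωn n, hE]
      simp only
      rw [hlog1 n]
      have hne1 : ν + d n ≠ 0 := (hνd n).ne'
      field_simp
      ring
    calc ∑ n, τ n * (Real.log (ω n) - ω n)
        = ∑ n, (τ n * (Real.log (ν + (D:ℝ)) - Real.log ν - 1
            - digamma ((ν + (D:ℝ))/2) + digamma (ν/2)) + 2 * (τ n * E n)) :=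
          Finset.sum_congr rfl fun n _ => expand n
      _ = (∑ n, τ n) * (Real.log (ν + (D:ℝ)) - Real.log ν - 1
            - digamma ((ν + (D:ℝ))/2) + digamma (ν/2)) + 2 * ∑ n, τ n * E n := by
          rw [Finset.sum_add_distrib, ← Finset.sum_mul, ← Finset.mul_sum]
      _ = _ := by rw [key]; ring
  rw [key2, inv_mul_cancel_left₀ hτsum.ne']
  rw [Real.log_div hν.ne' two_ne_zero, Real.log_div hνD.ne' two_ne_zero]
  ring
end

section
/- Let D ≥ 1, x, μ ∈ ℝ^D, and let Σ be a symmetric positive-definite D×D real matrix. Write d² = (x − μ)ᵀ Σ⁻¹ (x − μ) and, for ν > 0, ω(ν) = (ν + D)/(ν + d²). Let ψ = (ln Γ)' denote the digamma function. Then the map ν ↦ ln p(x; ν, μ, Σ), where p is the multivariate Student-t density, is differentiable on (0, ∞) and its derivative at ν equals (1/2)·[ψ((D + ν)/2) − ψ(ν/2) + 1 − ln((ν + D)/ν) + ln ω(ν) − ω(ν)]. -/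
open scoped BigOperators Matrix

/-- the map `ν ↦ log p(x; ν, μ, Σ)` is differentiable on `(0, ∞)` and its
derivative at `ν` is
`(1/2) * (ψ((D+ν)/2) - ψ(ν/2) + 1 - log ((ν+D)/ν) + log (ω ν) - ω ν)`,
where `d² = (x-μ)ᵀ Σ⁻¹ (x-μ)` and `ω ν = (ν+D)/(ν+d²)`. -/
theorem studentT_log_deriv_dof
    (D : ℕ) (hD : 1 ≤ D) (x μ : Fin D → ℝ)
    (S : Matrix (Fin D) (Fin D) ℝ) (hSsymm : S.IsSymm) (hS : S.PosDef)
    (d2 : ℝ) (hd2 : d2 = (x - μ) ⬝ᵥ (S⁻¹ *ᵥ (x - μ)))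
    (ω : ℝ → ℝ) (hω : ω = fun ν => (ν + (D : ℝ)) / (ν + d2)) :
    ∀ ν : ℝ, 0 < ν →
      HasDerivAt (fun ν' : ℝ => Real.log (studentTDensity D ν' μ S x))
        ((1 / 2) * (digamma (((D : ℝ) + ν) / 2) - digamma (ν / 2) + 1 -
            Real.log ((ν + (D : ℝ)) / ν) + Real.log (ω ν) - ω ν)) ν := by
  intro ν hν
  have hπ : (0:ℝ) < Real.pi := Real.pi_pos
  have hdet : 0 < S.det := hS.det_pos
  have hDr : (0:ℝ) < (D : ℝ) := by exact_mod_cast Nat.lt_of_lt_of_le Nat.zero_lt_one hD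
  have hd2nn : 0 ≤ d2 := by
    rw [hd2]
    have h := (hS.inv).posSemidef.re_dotProduct_nonneg (x - μ)
    simpa using h
  -- digamma derivative helper
  have hdg : ∀ u : ℝ, 0 < u →
      HasDerivAt (fun t => Real.log (Real.Gamma t)) (digamma u) u := by
    intro u hu
    have h1 : DifferentiableAt ℝ Real.Gamma u :=
      Real.differentiableAt_Gamma (fun m =>
        (lt_of_le_of_lt (neg_nonpos.mpr (Nat.cast_nonneg m)) hu).ne')
    have h2 : DifferentiableAt ℝ (fun t => Real.log (Real.Gamma t)) u :=
      h1.log (Real.Gamma_pos_of_pos hu).ne'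
    exact h2.hasDerivAt
  have hA : (0:ℝ) < ((D:ℝ) + ν) / 2 := by positivity
  have hB : (0:ℝ) < ν / 2 := by positivity
  have hinner1 : HasDerivAt (fun t : ℝ => ((D:ℝ) + t) / 2) (1 / 2) ν := by
    simpa using ((hasDerivAt_id ν).const_add ((D:ℝ))).div_const 2
  have hinner2 : HasDerivAt (fun t : ℝ => t / 2) (1 / 2) ν := by
    simpa using (hasDerivAt_id ν).div_const 2
  have h1 : HasDerivAt (fun t => Real.log (Real.Gamma (((D:ℝ) + t) / 2)))
      (digamma (((D:ℝ) + ν) / 2) * (1 / 2)) ν := by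
    have := (hdg _ hA).comp ν hinner1
    exact this
  have h2 : HasDerivAt (fun t => Real.log (Real.Gamma (t / 2)))
      (digamma (ν / 2) * (1 / 2)) ν := by
    have := (hdg _ hB).comp ν hinner2
    exact this
  have h3 : HasDerivAt (fun t : ℝ => (D:ℝ) / 2 * Real.log t) ((D:ℝ) / 2 * ν⁻¹) ν :=
    (Real.hasDerivAt_log hν.ne').const_mul ((D:ℝ) / 2)
  have hg : (0:ℝ) < 1 + d2 * ν⁻¹ := by positivity
  have h4a : HasDerivAt (fun t : ℝ => 1 + d2 * t⁻¹) (d2 * (-(ν ^ 2)⁻¹)) ν :=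
    ((hasDerivAt_inv hν.ne').const_mul d2).const_add 1
  have hlog4 : HasDerivAt (fun t : ℝ => Real.log (1 + d2 * t⁻¹))
      ((d2 * (-(ν ^ 2)⁻¹)) / (1 + d2 * ν⁻¹)) ν := h4a.log hg.ne'
  have h5 : HasDerivAt (fun t : ℝ => ((D:ℝ) + t) / 2 * Real.log (1 + d2 * t⁻¹))
      (1 / 2 * Real.log (1 + d2 * ν⁻¹) +
        ((D:ℝ) + ν) / 2 * ((d2 * (-(ν ^ 2)⁻¹)) / (1 + d2 * ν⁻¹))) ν :=
    hinner1.mul hlog4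
  -- derivative of the explicit log-density
  have hF : HasDerivAt (fun t : ℝ =>
      Real.log (Real.Gamma (((D:ℝ) + t) / 2)) - Real.log (Real.Gamma (t / 2)) -
        (D:ℝ) / 2 * Real.log t -
        ((D:ℝ) / 2 * Real.log Real.pi + 1 / 2 * Real.log S.det) -
        ((D:ℝ) + t) / 2 * Real.log (1 + d2 * t⁻¹))
      ((1 / 2) * (digamma (((D : ℝ) + ν) / 2) - digamma (ν / 2) + 1 -
          Real.log ((ν + (D : ℝ)) / ν) + Real.log (ω ν) - ω ν)) ν := by
    have h := (((h1.sub h2).sub h3).sub_const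
      ((D:ℝ) / 2 * Real.log Real.pi + 1 / 2 * Real.log S.det)).sub h5
    refine h.congr_deriv ?_
    rw [hω]
    have hνd2 : (0:ℝ) < ν + d2 := by positivity
    have hνD : (0:ℝ) < ν + (D:ℝ) := by positivity
    have e1 : (1:ℝ) + d2 * ν⁻¹ = (ν + d2) / ν := by field_simp
    rw [e1, Real.log_div hνd2.ne' hν.ne', Real.log_div hνD.ne' hν.ne',
        Real.log_div hνD.ne' hνd2.ne']
    field_simp
    ring
  refine hF.congr_of_eventuallyEq ?_
  filter_upwards [isOpen_Ioi.mem_nhds hν] with t ht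
  have ht0 : (0:ℝ) < t := ht
  have hGt1 : 0 < Real.Gamma (((D:ℝ) + t) / 2) := Real.Gamma_pos_of_pos (by positivity)
  have hGt2 : 0 < Real.Gamma (t / 2) := Real.Gamma_pos_of_pos (by positivity)
  have hbase : (0:ℝ) < 1 + d2 / t := by positivity
  have hpow1 : (0:ℝ) < (t * Real.pi) ^ ((D:ℝ) / 2) := Real.rpow_pos_of_pos (by positivity) _
  have hpow2 : (0:ℝ) < S.det ^ ((1:ℝ) / 2) := Real.rpow_pos_of_pos hdet _
  rw [studentTDensity, ← hd2]
  rw [Real.log_mul (by positivity) (by positivity),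
      Real.log_div hGt1.ne' (by positivity),
      Real.log_mul (by positivity) hpow2.ne',
      Real.log_mul hGt2.ne' hpow1.ne',
      Real.log_rpow (by positivity), Real.log_rpow hdet, Real.log_rpow hbase,
      Real.log_mul ht0.ne' hπ.ne']
  rw [div_eq_mul_inv d2 t]
  ring
end

section
/- Let D ≥ 1, ν > 0, μ ∈ ℝ^D, and let Σ be a symmetric positive-definite D×D real matrix. Then the multivariate Student-t density integrates to one: ∫_{ℝ^D} Γ((D+ν)/2) / (Γ(ν/2) (νπ)^{D/2} (det Σ)^{1/2}) · (1 + (x − μ)ᵀ Σ⁻¹ (x − μ)/ν)^{−(D+ν)/2} dx = 1, where the integral is with respect to Lebesgue measure on ℝ^D. -/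
open scoped BigOperators Matrix

open MeasureTheory Set Real


lemma gammaRep {s b : ℝ} (hs : 0 < s) (hb : 0 < b) :
    ∫⁻ t in Ioi (0:ℝ), ENNReal.ofReal (t ^ (s - 1) * Real.exp (-(b * t)))
      = ENNReal.ofReal ((1 / b) ^ s * Real.Gamma s) := by
  rw [← Real.integral_rpow_mul_exp_neg_mul_Ioi hs hb]
  rw [← ofReal_integral_eq_lintegral_ofReal]
  · refine (integrableOn_rpow_mul_exp_neg_mul_rpow (p := 1) (s := s - 1) (by linarith) one_pos hb).congr_fun
      (fun t ht => by simp only [Real.rpow_one, neg_mul]) measurableSet_Ioi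
  · filter_upwards [ae_restrict_mem measurableSet_Ioi] with t ht
    have : (0:ℝ) < t := ht
    positivity

lemma gauss (D : ℕ) {t : ℝ} (ht : 0 < t) :
    ∫⁻ y : Fin D → ℝ, ENNReal.ofReal (Real.exp (-(t * ∑ i, y i ^ 2)))
      = ENNReal.ofReal ((Real.pi / t) ^ ((D : ℝ) / 2)) := by
  have hpt : (Real.pi / t) ^ ((D : ℝ) / 2) = (√(Real.pi / t)) ^ D := by
    rw [Real.sqrt_eq_rpow, ← Real.rpow_natCast (_ ^ _) D, ← Real.rpow_mul (by positivity)]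
    ring_nf
  have hrw : ∀ y : Fin D → ℝ, Real.exp (-(t * ∑ i, y i ^ 2))
      = ∏ i, Real.exp (-(t * y i ^ 2)) := by
    intro y
    rw [← Real.exp_sum]
    congr 1
    rw [Finset.mul_sum, ← Finset.sum_neg_distrib]
  simp_rw [hrw]
  rw [← ofReal_integral_eq_lintegral_ofReal]
  · rw [volume_pi, integral_fintype_prod_eq_pow (ι := Fin D) (fun x : ℝ => Real.exp (-(t * x ^ 2)))]
    simp_rw [neg_mul_eq_neg_mul]
    rw [integral_gaussian, hpt, Fintype.card_fin]
  · exact Integrable.fin_nat_prod (fun i => by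
      simpa [neg_mul] using integrable_exp_neg_mul_sq ht)
  · exact Filter.Eventually.of_forall fun y => Finset.prod_nonneg fun i _ => (Real.exp_pos _).le

lemma core (D : ℕ) {ν : ℝ} (hν : 0 < ν) :
    ∫⁻ y : Fin D → ℝ, ENNReal.ofReal ((1 + ∑ i, y i ^ 2) ^ (-(((D : ℝ) + ν) / 2)))
      = ENNReal.ofReal (Real.pi ^ ((D : ℝ) / 2) * Real.Gamma (ν / 2)
          / Real.Gamma (((D : ℝ) + ν) / 2)) := by
  set s : ℝ := ((D : ℝ) + ν) / 2 with hsdef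
  have hs : 0 < s := by positivity
  have hQ : ∀ y : Fin D → ℝ, (0:ℝ) ≤ ∑ i, y i ^ 2 :=
    fun y => Finset.sum_nonneg fun i _ => sq_nonneg _
  have hGs : 0 < Real.Gamma s := Real.Gamma_pos_of_pos hs
  have key : ENNReal.ofReal (Real.Gamma s)
      * ∫⁻ y : Fin D → ℝ, ENNReal.ofReal ((1 + ∑ i, y i ^ 2) ^ (-s))
      = ENNReal.ofReal (Real.pi ^ ((D : ℝ) / 2) * Real.Gamma (ν / 2)) := by
    rw [← lintegral_const_mul' _ _ ENNReal.ofReal_ne_top]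
    have step1 : ∀ y : Fin D → ℝ,
        ENNReal.ofReal (Real.Gamma s) * ENNReal.ofReal ((1 + ∑ i, y i ^ 2) ^ (-s))
        = ∫⁻ t in Ioi (0:ℝ),
            ENNReal.ofReal (t ^ (s - 1) * Real.exp (-((1 + ∑ i, y i ^ 2) * t))) := by
      intro y
      have hb : (0:ℝ) < 1 + ∑ i, y i ^ 2 := by have := hQ y; linarith
      rw [gammaRep hs hb, ← ENNReal.ofReal_mul hGs.le]
      congr 1
      rw [one_div, Real.rpow_neg hb.le, ← Real.inv_rpow hb.le]
      ring
    simp_rw [step1]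
    rw [lintegral_lintegral_swap]
    · have inner : ∀ t ∈ Ioi (0:ℝ),
          (∫⁻ y : Fin D → ℝ,
            ENNReal.ofReal (t ^ (s - 1) * Real.exp (-((1 + ∑ i, y i ^ 2) * t))))
          = ENNReal.ofReal (t ^ (s - 1) * Real.exp (-t))
              * ENNReal.ofReal ((Real.pi / t) ^ ((D : ℝ) / 2)) := by
        intro t ht
        have ht : (0:ℝ) < t := ht
        have hrw : ∀ y : Fin D → ℝ,
            ENNReal.ofReal (t ^ (s - 1) * Real.exp (-((1 + ∑ i, y i ^ 2) * t)))
            = ENNReal.ofReal (t ^ (s - 1) * Real.exp (-t))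
                * ENNReal.ofReal (Real.exp (-(t * ∑ i, y i ^ 2))) := by
          intro y
          rw [← ENNReal.ofReal_mul (by positivity)]
          congr 1
          rw [mul_assoc, ← Real.exp_add]
          ring_nf
        simp_rw [hrw]
        rw [lintegral_const_mul' _ _ ENNReal.ofReal_ne_top, gauss D ht]
      rw [setLIntegral_congr_fun measurableSet_Ioi inner]
      have inner2 : ∀ t ∈ Ioi (0:ℝ),
          ENNReal.ofReal (t ^ (s - 1) * Real.exp (-t))
              * ENNReal.ofReal ((Real.pi / t) ^ ((D : ℝ) / 2))
          = ENNReal.ofReal (Real.pi ^ ((D : ℝ) / 2))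
              * ENNReal.ofReal (t ^ (ν / 2 - 1) * Real.exp (-(1 * t))) := by
        intro t ht
        have ht : (0:ℝ) < t := ht
        rw [← ENNReal.ofReal_mul (by positivity), ← ENNReal.ofReal_mul (by positivity)]
        congr 1
        rw [Real.div_rpow Real.pi_pos.le ht.le, Real.rpow_sub ht, Real.rpow_sub ht]
        have h1 : s = (D : ℝ) / 2 + ν / 2 := by rw [hsdef]; ring
        rw [h1, Real.rpow_add ht, Real.rpow_one, one_mul]
        field_simp
      rw [setLIntegral_congr_fun measurableSet_Ioi inner2,
        lintegral_const_mul' _ _ ENNReal.ofReal_ne_top,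
        gammaRep (by positivity) one_pos, ← ENNReal.ofReal_mul (by positivity)]
      congr 1
      simp
    · apply Measurable.aemeasurable
      apply Measurable.ennreal_ofReal
      have h1 : Measurable fun t : ℝ => t ^ (s - 1) := by measurability
      refine (h1.comp measurable_snd).mul ?_
      have h2 : Continuous fun p : (Fin D → ℝ) × ℝ =>
          Real.exp (-((1 + ∑ i, p.1 i ^ 2) * p.2)) := by fun_prop
      exact h2.measurable
  have h0 : ENNReal.ofReal (Real.Gamma s) ≠ 0 := by
    simp [ENNReal.ofReal_eq_zero, not_le, hGs]
  rw [ENNReal.ofReal_div_of_pos hGs, ENNReal.eq_div_iff h0 ENNReal.ofReal_ne_top]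
  exact key

open scoped MatrixOrder Matrix.Norms.L2Operator in
lemma matSqrt {D : ℕ} {S : Matrix (Fin D) (Fin D) ℝ} (hS : S.PosDef) :
    ∃ A : Matrix (Fin D) (Fin D) ℝ, A * A = S ∧ Aᵀ = A := by
  refine ⟨CFC.sqrt S, CFC.sqrt_mul_sqrt_self S hS.posSemidef.nonneg, ?_⟩
  have h : IsSelfAdjoint (CFC.sqrt S) := (CFC.sqrt_nonneg S).isSelfAdjoint
  have h2 : star (CFC.sqrt S) = CFC.sqrt S := h
  rwa [Matrix.star_eq_conjTranspose, Matrix.conjTranspose_eq_transpose_of_trivial] at h2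

/-- the multivariate Student-t density integrates to one with respect to
Lebesgue measure on `ℝ^D`. -/
theorem studentT_integral_eq_one
    (D : ℕ) (hD : 1 ≤ D) (ν : ℝ) (hν : 0 < ν) (μ : Fin D → ℝ)
    (S : Matrix (Fin D) (Fin D) ℝ) (hSsymm : S.IsSymm) (hS : S.PosDef) :
    ∫ x : Fin D → ℝ, studentTDensity D ν μ S x = 1 := by
  classical
  set s : ℝ := ((D : ℝ) + ν) / 2 with hsdef
  have hs : 0 < s := by positivity
  have hGs : 0 < Real.Gamma s := Real.Gamma_pos_of_pos hs
  have hGν : 0 < Real.Gamma (ν / 2) := Real.Gamma_pos_of_pos (by positivity)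
  have hdetS : 0 < S.det := hS.det_pos
  -- the square root of S
  obtain ⟨A, hAA, hAsymm⟩ := matSqrt hS
  have hdetAA : A.det * A.det = S.det := by rw [← Matrix.det_mul, hAA]
  have hdetA : |A.det| = Real.sqrt S.det := by
    rw [← hdetAA, Real.sqrt_mul_self_eq_abs]
  have hdetAne : A.det ≠ 0 := by
    intro h
    rw [← hdetAA, h, mul_zero] at hdetS
    exact lt_irrefl _ hdetS
  -- the scaled square root
  set B : Matrix (Fin D) (Fin D) ℝ := Real.sqrt ν • A with hBdef
  have hdetB : B.det = Real.sqrt ν ^ D * A.det := by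
    rw [hBdef, Matrix.det_smul, Fintype.card_fin]
  have hdetBpos : 0 < |B.det| := by
    rw [hdetB, abs_mul, abs_of_nonneg (by positivity : (0:ℝ) ≤ Real.sqrt ν ^ D), hdetA]
    have : 0 < Real.sqrt ν ^ D := by positivity
    have h2 : 0 < Real.sqrt S.det := Real.sqrt_pos.mpr hdetS
    positivity
  have hdetBne : B.det ≠ 0 := fun h => by simp [h] at hdetBpos
  -- quadratic form identity
  have hASA : A * S⁻¹ * A = 1 := by
    rw [← hAA, Matrix.mul_inv_rev]
    rw [show A * (A⁻¹ * A⁻¹) * A = A * A⁻¹ * (A⁻¹ * A) by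
      rw [Matrix.mul_assoc, Matrix.mul_assoc, Matrix.mul_assoc]]
    rw [Matrix.mul_nonsing_inv A hdetAne.isUnit, Matrix.nonsing_inv_mul A hdetAne.isUnit, Matrix.one_mul]
  have hquad : ∀ y : Fin D → ℝ,
      (B *ᵥ y) ⬝ᵥ (S⁻¹ *ᵥ (B *ᵥ y)) = ν * ∑ i, y i ^ 2 := by
    intro y
    have h1 : (B *ᵥ y) ⬝ᵥ (S⁻¹ *ᵥ (B *ᵥ y)) = y ⬝ᵥ ((Bᵀ * S⁻¹ * B) *ᵥ y) := by
      rw [Matrix.mulVec_mulVec, dotProduct_comm, Matrix.dotProduct_mulVec,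
        ← Matrix.mulVec_transpose, Matrix.mulVec_mulVec, dotProduct_comm]
      rw [← Matrix.mul_assoc]
    have h2 : Bᵀ * S⁻¹ * B = ν • (1 : Matrix (Fin D) (Fin D) ℝ) := by
      rw [hBdef, Matrix.transpose_smul, hAsymm, Matrix.smul_mul, Matrix.mul_smul,
        Matrix.smul_mul, smul_smul, Real.mul_self_sqrt hν.le, hASA]
    rw [h1, h2, Matrix.smul_mulVec, Matrix.one_mulVec, dotProduct_smul,
      smul_eq_mul]
    congr 1
    simp [dotProduct, sq]
  -- positivity and continuity of the density
  have hQnonneg : ∀ x : Fin D → ℝ, 0 ≤ (x - μ) ⬝ᵥ (S⁻¹ *ᵥ (x - μ)) := by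
    intro x
    have := hS.inv.posSemidef.dotProduct_mulVec_nonneg (x - μ)
    simpa using this
  have hbase : ∀ x : Fin D → ℝ, 0 < 1 + (x - μ) ⬝ᵥ (S⁻¹ *ᵥ (x - μ)) / ν := by
    intro x
    have := hQnonneg x
    have : 0 ≤ (x - μ) ⬝ᵥ (S⁻¹ *ᵥ (x - μ)) / ν := by positivity
    linarith
  have hCpos : 0 < Real.Gamma s /
      (Real.Gamma (ν / 2) * (ν * Real.pi) ^ ((D : ℝ) / 2) * S.det ^ ((1 : ℝ) / 2)) := by
    have h1 : 0 < (ν * Real.pi) ^ ((D : ℝ) / 2) := by positivity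
    have h2 : 0 < S.det ^ ((1 : ℝ) / 2) := by positivity
    positivity
  have hdens_nonneg : ∀ x, 0 ≤ studentTDensity D ν μ S x := by
    intro x
    unfold studentTDensity
    have := hbase x
    positivity
  have hQcont : Continuous fun x : Fin D → ℝ => (x - μ) ⬝ᵥ (S⁻¹ *ᵥ (x - μ)) := by
    simp only [dotProduct, Matrix.mulVec]
    fun_prop
  have hdens_cont : Continuous (studentTDensity D ν μ S) := by
    unfold studentTDensity
    apply continuous_const.mul
    apply Continuous.rpow_const
    · fun_prop
    · intro x
      exact Or.inl (ne_of_gt (hbase x))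
  -- density at transformed points
  have hdens_eq : ∀ y : Fin D → ℝ,
      studentTDensity D ν μ S (μ + B *ᵥ y)
        = Real.Gamma s / (Real.Gamma (ν / 2) * (ν * Real.pi) ^ ((D : ℝ) / 2)
            * S.det ^ ((1 : ℝ) / 2)) * (1 + ∑ i, y i ^ 2) ^ (-s) := by
    intro y
    unfold studentTDensity
    rw [add_sub_cancel_left, hquad y, mul_div_cancel_left₀ _ (ne_of_gt hν)]
  set f : (Fin D → ℝ) → ENNReal := fun x => ENNReal.ofReal (studentTDensity D ν μ S x)
    with hfdef
  have hfmeas : Measurable f := hdens_cont.measurable.ennreal_ofReal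
  have hmap : Measure.map (Matrix.toLin' B) volume
      = ENNReal.ofReal |B.det|⁻¹ • volume := by
    rw [Real.map_matrix_volume_pi_eq_smul_volume_pi hdetBne, abs_inv]
  have hmb : Measurable fun x : Fin D → ℝ => f (μ + x) :=
    hfmeas.comp (measurable_id.const_add μ)
  have hlin : (∫⁻ y, f (μ + B *ᵥ y))
      = ENNReal.ofReal |B.det|⁻¹ * ∫⁻ x, f (μ + x) := by
    have hcont : Continuous (Matrix.toLin' B) := LinearMap.continuous_on_pi _
    calc (∫⁻ y, f (μ + B *ᵥ y))
        = ∫⁻ x, f (μ + x) ∂(Measure.map (Matrix.toLin' B) volume) := by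
          rw [lintegral_map hmb hcont.measurable]
          simp [Matrix.toLin'_apply]
      _ = ENNReal.ofReal |B.det|⁻¹ * ∫⁻ x, f (μ + x) := by
          rw [hmap, lintegral_smul_measure, smul_eq_mul]
  have htrans : (∫⁻ x, f (μ + x)) = ∫⁻ x, f x :=
    lintegral_add_left_eq_self f μ
  have hmain : (∫⁻ x, f x) = ENNReal.ofReal |B.det| * ∫⁻ y, f (μ + B *ᵥ y) := by
    rw [hlin, ← mul_assoc, ← ENNReal.ofReal_mul (abs_nonneg _),
      mul_inv_cancel₀ (ne_of_gt hdetBpos), ENNReal.ofReal_one, one_mul, htrans]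
  have hval : ∀ y : Fin D → ℝ, f (μ + B *ᵥ y)
      = ENNReal.ofReal (Real.Gamma s / (Real.Gamma (ν / 2)
          * (ν * Real.pi) ^ ((D : ℝ) / 2) * S.det ^ ((1 : ℝ) / 2)))
        * ENNReal.ofReal ((1 + ∑ i, y i ^ 2) ^ (-s)) := by
    intro y
    rw [hfdef]
    simp only []
    rw [hdens_eq y, ENNReal.ofReal_mul hCpos.le]
  rw [integral_eq_lintegral_of_nonneg_ae (Filter.Eventually.of_forall hdens_nonneg)
    hdens_cont.aestronglyMeasurable]
  have hfin : (∫⁻ x, ENNReal.ofReal (studentTDensity D ν μ S x)) = 1 := by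
    rw [show (∫⁻ x, ENNReal.ofReal (studentTDensity D ν μ S x)) = ∫⁻ x, f x from rfl,
      hmain]
    simp_rw [hval]
    rw [lintegral_const_mul' _ _ ENNReal.ofReal_ne_top, core D hν,
      ← ENNReal.ofReal_mul hCpos.le, ← ENNReal.ofReal_mul (abs_nonneg _)]
    have hnum : |B.det| * (Real.Gamma s / (Real.Gamma (ν / 2)
          * (ν * Real.pi) ^ ((D : ℝ) / 2) * S.det ^ ((1 : ℝ) / 2))
        * (Real.pi ^ ((D : ℝ) / 2) * Real.Gamma (ν / 2) / Real.Gamma s)) = 1 := by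
      rw [hdetB, abs_mul, abs_of_nonneg (by positivity : (0:ℝ) ≤ Real.sqrt ν ^ D), hdetA]
      have e1 : Real.sqrt S.det = S.det ^ ((1:ℝ)/2) := by
        rw [Real.sqrt_eq_rpow]
      have e2 : Real.sqrt ν ^ D = ν ^ ((D:ℝ)/2) := by
        rw [Real.sqrt_eq_rpow, ← Real.rpow_natCast (ν ^ ((1:ℝ)/2)) D,
          ← Real.rpow_mul hν.le]
        congr 1
        ring
      have e3 : (ν * Real.pi) ^ ((D:ℝ)/2)
          = ν ^ ((D:ℝ)/2) * Real.pi ^ ((D:ℝ)/2) :=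
        Real.mul_rpow hν.le Real.pi_pos.le
      rw [e1, e2, e3]
      have p1 : (0:ℝ) < ν ^ ((D:ℝ)/2) := by positivity
      have p2 : (0:ℝ) < Real.pi ^ ((D:ℝ)/2) := by positivity
      have p3 : (0:ℝ) < S.det ^ ((1:ℝ)/2) := by positivity
      field_simp
    rw [hnum, ENNReal.ofReal_one]
  rw [hfin, ENNReal.toReal_one]
end
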